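/- Let αx and αy be strictly positive real numbers. Then the cubic polynomial Q_{(αx,αy)}(X) = 1 − (αx·αy + αx + αy)·X² − 2·αx·αy·X³ has exactly one strictly positive real root (denoted τ⁺(αx,αy)). -/
import Mathlib


open Polynomial

/-- For `αx, αy > 0`, the cubic polynomial
`Q_{(αx,αy)}(X) = 1 − (αx·αy + αx + αy)·X² − 2·αx·αy·X³`
has exactly one strictly positive real root. -/
theorem cubic_Q_has_unique_positive_root (αx αy : ℝ) (hαx : 0 < αx) (hαy : 0 < αy) :
    ∃! τ : ℝ, 0 < τ ∧
      (C 1 - C (αx * αy + αx + αy) * X ^ 2 - C (2 * (αx * αy)) * X ^ 3 : ℝ[X]).IsRoot τ := by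
  set a : ℝ := αx * αy + αx + αy with ha
  set b : ℝ := 2 * (αx * αy) with hb
  have ha0 : 0 < a := by positivity
  have hb0 : 0 < b := by positivity
  clear_value a b
  have hroot : ∀ τ : ℝ,
      ((C 1 - C a * X ^ 2 - C b * X ^ 3 : ℝ[X]).IsRoot τ) ↔ 1 - a * τ ^ 2 - b * τ ^ 3 = 0 := by
    intro τ; simp [IsRoot]
  set f : ℝ → ℝ := fun t => 1 - a * t ^ 2 - b * t ^ 3 with hf
  have hcont : Continuous f := by fun_prop
  set T : ℝ := (1 + a) / a with hT
  have hT0 : 0 < T := by positivity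
  have hfT : f T < 0 := by
    have h1 : a * T ^ 2 ≥ 1 := by
      rw [hT, div_pow, mul_div_assoc', ge_iff_le, le_div_iff₀ (by positivity)]
      nlinarith
    show 1 - a * T ^ 2 - b * T ^ 3 < 0
    nlinarith [pow_pos hT0 3]
  have hf0 : f 0 = 1 := by simp [hf]
  obtain ⟨τ, hτmem, hτ0⟩ : ∃ τ ∈ Set.Icc (0:ℝ) T, f τ = 0 := by
    have := intermediate_value_Icc' (le_of_lt hT0) hcont.continuousOn
      (a := 0) (b := T)
    have h0 : (0:ℝ) ∈ Set.Icc (f T) (f 0) := ⟨le_of_lt hfT, by rw [hf0]; norm_num⟩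
    obtain ⟨τ, hm, he⟩ := this h0
    exact ⟨τ, hm, he⟩
  have hτpos : 0 < τ := by
    rcases lt_or_eq_of_le hτmem.1 with h | h
    · exact h
    · exfalso; rw [← h] at hτ0; rw [hf0] at hτ0; norm_num at hτ0
  refine ⟨τ, ⟨hτpos, (hroot τ).mpr hτ0⟩, ?_⟩
  rintro s ⟨hs0, hsroot⟩
  have hs : 1 - a * s ^ 2 - b * s ^ 3 = 0 := (hroot s).mp hsroot
  have hτr : 1 - a * τ ^ 2 - b * τ ^ 3 = 0 := hτ0
  by_contra hne
  rcases lt_or_gt_of_ne hne with h | h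
  · nlinarith [mul_pos ha0 (mul_pos (sub_pos.mpr h) (by positivity : (0:ℝ) < τ + s)),
      mul_pos hb0 (mul_pos (sub_pos.mpr h)
        (by positivity : (0:ℝ) < τ * τ + τ * s + s * s))]
  · nlinarith [mul_pos ha0 (mul_pos (sub_pos.mpr h) (by positivity : (0:ℝ) < s + τ)),
      mul_pos hb0 (mul_pos (sub_pos.mpr h)
        (by positivity : (0:ℝ) < τ * τ + τ * s + s * s))]
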